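/- If G is a finite nonabelian group with trivial tensor center Z^⊗(G) = 1 and p is the smallest prime dividing |G|, then d^⊗(G) ≤ 1/p. -/

import Mathlib

open scoped commutatorElement

open Finset Subgroup MulAction

section Aux
variable {G : Type*} [Group G] [Fintype G] {p : ℕ}

private lemma aux_p_le_divisor (hp : p.Prime)
    (hmin : ∀ q : ℕ, q.Prime → q ∣ Fintype.card G → p ≤ q)
    {d : ℕ} (hd : d ∣ Fintype.card G) (hd1 : d ≠ 1) : p ≤ d := by
  have hn : 0 < Fintype.card G := Fintype.card_pos
  have hd0 : d ≠ 0 := by rintro rfl; rw [zero_dvd_iff] at hd; omega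
  have hpr : d.minFac.Prime := Nat.minFac_prime hd1
  have h1 : p ≤ d.minFac := hmin _ hpr ((Nat.minFac_dvd d).trans hd)
  exact h1.trans (Nat.minFac_le (by omega))

private lemma aux_gap (hp : p.Prime)
    (hmin : ∀ q : ℕ, q.Prime → q ∣ Fintype.card G → p ≤ q)
    {H K : Subgroup G} (hle : H ≤ K) (hne : H ≠ K) :
    p * Nat.card H ≤ Nat.card K := by
  have h1 : Nat.card (H.subgroupOf K) * (H.subgroupOf K).index = Nat.card K :=
    Subgroup.card_mul_index _
  have hcard : Nat.card (H.subgroupOf K) = Nat.card H :=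
    Nat.card_congr (Subgroup.subgroupOfEquivOfLe hle).toEquiv
  have hidx_dvd : (H.subgroupOf K).index ∣ Fintype.card G := by
    have h2 : (H.subgroupOf K).index ∣ Nat.card K := Subgroup.index_dvd_card _
    have h3 : Nat.card K ∣ Nat.card G := Subgroup.card_subgroup_dvd_card K
    rw [← Nat.card_eq_fintype_card]
    exact h2.trans h3
  have hne1 : (H.subgroupOf K).index ≠ 1 := by
    rw [Ne, Subgroup.index_eq_one, Subgroup.subgroupOf_eq_top]
    intro hKH
    exact hne (le_antisymm hle hKH)
  have hp_le := aux_p_le_divisor hp hmin hidx_dvd hne1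
  calc p * Nat.card H = p * Nat.card (H.subgroupOf K) := by rw [hcard]
    _ ≤ (H.subgroupOf K).index * Nat.card (H.subgroupOf K) :=
        Nat.mul_le_mul_right _ hp_le
    _ = Nat.card K := by rw [mul_comm]; exact h1

private lemma aux_normal (hp : p.Prime)
    (hmin : ∀ q : ℕ, q.Prime → q ∣ Fintype.card G → p ≤ q)
    {H : Subgroup G} (hidx : H.index = p) : H.Normal := by
  classical
  have hcore : H.normalCore = (MulAction.toPermHom G (G ⧸ H)).ker := Subgroup.normalCore_eq_ker H
  have hrel : H.normalCore.relIndex H * H.index = H.normalCore.index :=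
    Subgroup.relIndex_mul_index H.normalCore_le
  set r := H.normalCore.relIndex H with hr
  have hdvdperm : H.normalCore.index ∣ Nat.factorial p := by
    rw [hcore, Subgroup.index_ker]
    have h1 : Nat.card (MulAction.toPermHom G (G ⧸ H)).range ∣ Nat.card (Equiv.Perm (G ⧸ H)) :=
      Subgroup.card_subgroup_dvd_card _
    have h2 : Nat.card (Equiv.Perm (G ⧸ H)) = Nat.factorial p := by
      rw [Nat.card_eq_fintype_card, Fintype.card_perm, ← Nat.card_eq_fintype_card,
        ← Subgroup.index_eq_card, hidx]
    rwa [h2] at h1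
  have hps : p - 1 + 1 = p := Nat.succ_pred_eq_of_pos hp.pos
  have hp1 : Nat.factorial p = p * Nat.factorial (p-1) := by
    calc Nat.factorial p = Nat.factorial (p - 1 + 1) := by rw [hps]
      _ = (p - 1 + 1) * Nat.factorial (p - 1) := Nat.factorial_succ _
      _ = p * Nat.factorial (p - 1) := by rw [hps]
  rw [hidx] at hrel
  have hrdvd : r ∣ Nat.factorial (p-1) := by
    have h3 : p * r ∣ p * Nat.factorial (p-1) := by
      rw [← hp1, mul_comm p r, hrel]
      exact hdvdperm
    exact (Nat.mul_dvd_mul_iff_left hp.pos).mp h3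
  have hr1 : r = 1 := by
    by_contra hne
    have hq := Nat.minFac_prime hne
    have hq1 : r.minFac ∣ Nat.factorial (p-1) := (Nat.minFac_dvd r).trans hrdvd
    have hle : r.minFac ≤ p - 1 := (Nat.Prime.dvd_factorial hq).mp hq1
    have hrG : r ∣ Fintype.card G := by
      have h4 : r ∣ Nat.card H := Subgroup.index_dvd_card (H.normalCore.subgroupOf H)
      have h5 : Nat.card H ∣ Nat.card G := Subgroup.card_subgroup_dvd_card H
      rw [← Nat.card_eq_fintype_card]
      exact h4.trans h5
    have hqG : r.minFac ∣ Fintype.card G := (Nat.minFac_dvd r).trans hrG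
    have h6 := hmin _ hq hqG
    have h7 := hp.two_le
    omega
  have hHle : H ≤ H.normalCore := Subgroup.relIndex_eq_one.mp hr1
  have heq : H.normalCore = H := le_antisymm H.normalCore_le hHle
  exact heq ▸ H.normalCore_normal


private lemma aux_card_subtype' {α : Type*} [Fintype α] (pr : α → Prop) [DecidablePred pr] :
    Nat.card {w // pr w} = #(Finset.univ.filter pr) := by
  rw [Nat.card_eq_fintype_card, Fintype.card_subtype]

private lemma aux_comm_center (hp : p.Prime)
    (hmin : ∀ q : ℕ, q.Prime → q ∣ Fintype.card G → p ≤ q)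
    (hidx : ∀ y : G, y ∉ center G → (centralizer {y}).index = p)
    {x y : G} (hxy : x * y ≠ y * x) : x⁻¹ * y⁻¹ * x * y ∈ center G := by
  have hx : x ∉ center G := fun h => hxy ((Subgroup.mem_center_iff.mp h y).symm)
  have hy : y ∉ center G := fun h => hxy (Subgroup.mem_center_iff.mp h x)
  have hxCy : x ∉ centralizer {y} := fun h => hxy (Subgroup.mem_centralizer_singleton_iff.mp h)
  have hyCx : y ∉ centralizer {x} := fun h => hxy (Subgroup.mem_centralizer_singleton_iff.mp h).symm
  haveI nCx : (centralizer {x} : Subgroup G).Normal := aux_normal hp hmin (hidx x hx)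
  haveI nCy : (centralizer {y} : Subgroup G).Normal := aux_normal hp hmin (hidx y hy)
  set c := x⁻¹ * y⁻¹ * x * y with hc
  have hcCx : c ∈ centralizer {x} := by
    have h1 : (y⁻¹) * x * (y⁻¹)⁻¹ ∈ centralizer {x} :=
      nCx.conj_mem x (Subgroup.mem_centralizer_singleton_iff.mpr rfl) y⁻¹
    have h2 : x⁻¹ * ((y⁻¹) * x * (y⁻¹)⁻¹) ∈ centralizer {x} :=
      mul_mem (inv_mem (Subgroup.mem_centralizer_singleton_iff.mpr rfl)) h1
    have h3 : x⁻¹ * ((y⁻¹) * x * (y⁻¹)⁻¹) = c := by rw [hc]; group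
    rwa [h3] at h2
  have hcCy : c ∈ centralizer {y} := by
    have h1 : (x⁻¹) * y⁻¹ * (x⁻¹)⁻¹ ∈ centralizer {y} :=
      nCy.conj_mem y⁻¹ (inv_mem (Subgroup.mem_centralizer_singleton_iff.mpr rfl)) x⁻¹
    have h2 : ((x⁻¹) * y⁻¹ * (x⁻¹)⁻¹) * y ∈ centralizer {y} :=
      mul_mem h1 (Subgroup.mem_centralizer_singleton_iff.mpr rfl)
    have h3 : ((x⁻¹) * y⁻¹ * (x⁻¹)⁻¹) * y = c := by rw [hc]; group
    rwa [h3] at h2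
  by_contra hcZ
  set M := (centralizer {c} : Subgroup G) with hM
  have hMidx : M.index = p := hidx c hcZ
  have hxM : x ∈ M := Subgroup.mem_centralizer_singleton_iff.mpr
    (Subgroup.mem_centralizer_singleton_iff.mp hcCx).symm
  have hyM : y ∈ M := Subgroup.mem_centralizer_singleton_iff.mpr
    (Subgroup.mem_centralizer_singleton_iff.mp hcCy).symm
  set I := (centralizer {x} ⊓ centralizer {y} : Subgroup G) with hI
  have hIM : I ≤ M := by
    intro k hk
    have hkx : Commute k x := Subgroup.mem_centralizer_singleton_iff.mp hk.1
    have hky : Commute k y := Subgroup.mem_centralizer_singleton_iff.mp hk.2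
    have hcom : Commute k c := by
      rw [hc]
      exact ((hkx.inv_right.mul_right hky.inv_right).mul_right hkx).mul_right hky
    exact Subgroup.mem_centralizer_singleton_iff.mpr hcom.eq
  have hIidx : I.index ≤ p * p := by
    have := Subgroup.index_inf_le (H := centralizer {x}) (K := centralizer {y})
    rwa [hidx x hx, hidx y hy] at this
  have hIcard : Nat.card I * I.index = Nat.card G := Subgroup.card_mul_index I
  have hnI : Nat.card G ≤ Nat.card I * (p * p) := by
    calc Nat.card G = Nat.card I * I.index := hIcard.symm
      _ ≤ Nat.card I * (p * p) := Nat.mul_le_mul_left _ hIidx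
  set W := (M ⊓ centralizer {x} : Subgroup G) with hW
  have hIW : I ≤ W := le_inf hIM inf_le_left
  have hxW : x ∈ W := ⟨hxM, Subgroup.mem_centralizer_singleton_iff.mpr rfl⟩
  have hxI : x ∉ I := fun h => hxCy h.2
  have hIWne : I ≠ W := fun h => hxI (h ▸ hxW)
  have hgap : p * Nat.card I ≤ Nat.card W := aux_gap hp hmin hIW hIWne
  have hMcard : Nat.card M * p = Nat.card G := by
    have := Subgroup.card_mul_index M
    rwa [hMidx] at this
  have hWM : Nat.card M ≤ Nat.card W := by
    have h1 : Nat.card M * p ≤ (p * Nat.card I) * p := by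
      rw [hMcard]
      calc Nat.card G ≤ Nat.card I * (p * p) := hnI
        _ = (p * Nat.card I) * p := by ring
    have h2 : Nat.card M * p ≤ Nat.card W * p := h1.trans (Nat.mul_le_mul_right p hgap)
    exact Nat.le_of_mul_le_mul_right h2 hp.pos
  have hWeq : W = M := Subgroup.eq_of_le_of_card_ge inf_le_left hWM
  have : y ∈ W := hWeq ▸ hyM
  exact hyCx this.2


private lemma aux_orbit_stab (y : G) :
    ∀ [DecidablePred fun w : G => IsConj y w],
    #(Finset.univ.filter fun w : G => IsConj y w) * Nat.card (centralizer ({y} : Set G)) =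
      Fintype.card G := by
  intro _
  classical
  have h1 := MulAction.card_orbit_mul_card_stabilizer_eq_card_group (ConjAct G) y
  have horb : Fintype.card (MulAction.orbit (ConjAct G) y) =
      #(Finset.univ.filter fun w : G => IsConj y w) := by
    rw [← Nat.card_eq_fintype_card, ← aux_card_subtype' (fun w : G => IsConj y w)]
    exact Nat.card_congr (Equiv.subtypeEquivRight fun w => by
      rw [ConjAct.mem_orbit_conjAct, isConj_comm])
  have hstab : Fintype.card (MulAction.stabilizer (ConjAct G) y) =
      Nat.card (centralizer ({y} : Set G)) := by
    rw [← Nat.card_eq_fintype_card]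
    refine (Nat.card_congr (Equiv.subtypeEquiv ConjAct.toConjAct.toEquiv fun a => ?_)).symm
    rw [Subgroup.centralizer_eq_comap_stabilizer]
    rfl
  have hG : Fintype.card (ConjAct G) = Fintype.card G := Fintype.card_congr ConjAct.ofConjAct.toEquiv
  rw [horb, hstab, hG] at h1
  exact h1

end Aux

/-- Theorem 3.4: let `G` be a finite nonabelian group with trivial tensor center
`Z⊗(G) = 1`, and let `p` be the smallest prime dividing `|G|`. Then `d⊗(G) ≤ 1/p`.
The tensor square is modelled by a group `T`, a pairing `t` and the commutator
homomorphism `κ`; tensor centralizers are subgroups of centralizers, conjugation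
invariance holds, `|G : C_G^⊗(x)| ≥ p` for `x ∉ Z⊗(G)`, and central elements have
tensor centralizer containing the derived subgroup. -/
theorem tensor_degree_le_one_div_p_of_trivial_tensor_center
    {G T : Type*} [Group G] [Fintype G] [Group T]
    (t : G → G → T) (κ : T →* G)
    (hκ : ∀ a b : G, κ (t a b) = ⁅a, b⁆)
    (hconj : ∀ g a x : G, t a x = 1 ↔ t (g⁻¹ * a * g) (g⁻¹ * x * g) = 1)
    (C : G → Subgroup G) (hC : ∀ x a : G, a ∈ C x ↔ t a x = 1)
    (hCle : ∀ x : G, C x ≤ Subgroup.centralizer {x})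
    (hG'Z : ∀ g ∈ commutator G, ∀ x ∈ Subgroup.center G, t g x = 1)
    (p : ℕ) (hp : p.Prime) (hdvd : p ∣ Fintype.card G)
    (hmin : ∀ q : ℕ, q.Prime → q ∣ Fintype.card G → p ≤ q)
    (hindex : ∀ x : G, (¬ ∀ y : G, t x y = 1) → p * Nat.card (C x) ≤ Fintype.card G)
    (hnonab : ∃ a b : G, a * b ≠ b * a)
    (hZtriv : ∀ g : G, (∀ y : G, t g y = 1) → g = 1) :
    (Nat.card {q : G × G // t q.1 q.2 = 1} : ℝ) / (Fintype.card G : ℝ) ^ 2 ≤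
      1 / (p : ℝ) := by
  classical
  have hn0 : 0 < Fintype.card G := Fintype.card_pos
  have hp0 : 0 < p := hp.pos
  set n := Fintype.card G with hndef
  suffices key : p * Nat.card {q : G × G // t q.1 q.2 = 1} ≤ n ^ 2 by
    rw [div_le_div_iff₀ (by exact_mod_cast pow_pos hn0 2) (by exact_mod_cast hp0), one_mul]
    have hcast : (Nat.card {q : G × G // t q.1 q.2 = 1} : ℝ) * (p : ℝ) =
        ((p * Nat.card {q : G × G // t q.1 q.2 = 1} : ℕ) : ℝ) := by push_cast; ring
    rw [hcast]
    have hcast2 : ((n : ℝ)) ^ 2 = ((n ^ 2 : ℕ) : ℝ) := by push_cast; ring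
    rw [hcast2]
    exact_mod_cast key
  -- basic facts
  set c : G → ℕ := fun x => Nat.card (C x) with hcdef
  have hcount : Nat.card {q : G × G // t q.1 q.2 = 1} = ∑ x : G, c x := by
    rw [aux_card_subtype' (fun q : G × G => t q.1 q.2 = 1)]
    rw [Finset.card_eq_sum_card_fiberwise (f := fun q : G × G => q.2) (t := Finset.univ)
      (fun x _ => Finset.mem_univ _)]
    refine Finset.sum_congr rfl fun x _ => ?_
    have hbij : #((Finset.univ.filter (fun q : G × G => t q.1 q.2 = 1)).filter
        (fun q : G × G => q.2 = x)) = #(Finset.univ.filter fun a : G => t a x = 1) := by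
      refine Finset.card_bij (fun q _ => q.1) ?_ ?_ ?_
      · intro q hq
        simp only [Finset.mem_filter, Finset.mem_univ, true_and] at hq ⊢
        rw [← hq.2]; exact hq.1
      · intro q hq q' hq' h
        simp only [Finset.mem_filter, Finset.mem_univ, true_and] at hq hq'
        exact Prod.ext h (hq.2.trans hq'.2.symm)
      · intro a ha
        simp only [Finset.mem_filter, Finset.mem_univ, true_and] at ha ⊢
        exact ⟨(a, x), ⟨ha, rfl⟩, rfl⟩
    rw [hbij, ← aux_card_subtype' (fun a : G => t a x = 1)]
    exact (Nat.card_congr (Equiv.subtypeEquivRight fun a => (hC x a))).symm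
  have hk3 : ∀ x : G, x ≠ 1 → p * c x ≤ n := fun x hx =>
    hindex x fun hall => hx (hZtriv x hall)
  have hcle : ∀ x : G, c x ≤ n := fun x =>
    (Subgroup.card_le_card_group (C x)).trans (le_of_eq Nat.card_eq_fintype_card)
  have hCconj : ∀ g x a : G, a ∈ C (g⁻¹ * x * g) ↔ g * a * g⁻¹ ∈ C x := by
    intro g x a
    rw [hC, hC]
    have h2 := hconj g (g * a * g⁻¹) x
    rw [show g⁻¹ * (g * a * g⁻¹) * g = a from by group] at h2
    exact h2.symm
  have hZconj : ∀ g x a : G, a ∈ Subgroup.centralizer ({g⁻¹ * x * g} : Set G) ↔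
      g * a * g⁻¹ ∈ Subgroup.centralizer ({x} : Set G) := by
    intro g x a
    rw [Subgroup.mem_centralizer_singleton_iff, Subgroup.mem_centralizer_singleton_iff]
    constructor
    · intro h
      calc (g * a * g⁻¹) * x = g * (a * (g⁻¹ * x * g)) * g⁻¹ := by group
        _ = g * ((g⁻¹ * x * g) * a) * g⁻¹ := by rw [← h]
        _ = x * (g * a * g⁻¹) := by group
    · intro h
      calc a * (g⁻¹ * x * g) = g⁻¹ * ((g * a * g⁻¹) * x) * g := by group
        _ = g⁻¹ * (x * (g * a * g⁻¹)) * g := by rw [← h]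
        _ = (g⁻¹ * x * g) * a := by group
  have hNCtop : ∀ y : G, y ∉ Subgroup.center G → Subgroup.centralizer ({y} : Set G) ≠ ⊤ := by
    intro y hy htop
    exact hy (Subgroup.centralizer_eq_top_iff_subset.mp htop rfl)
  have hcenttop : ∀ y : G, y ∉ Subgroup.center G →
      p * Nat.card (Subgroup.centralizer ({y} : Set G)) ≤ n := by
    intro y hy
    have h1 := aux_gap hp hmin (le_top : Subgroup.centralizer ({y} : Set G) ≤ ⊤) (hNCtop y hy)
    rw [Subgroup.card_top] at h1
    exact h1.trans (le_of_eq Nat.card_eq_fintype_card)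
  set Zf : Finset G := Finset.univ.filter (fun z : G => z ∈ Subgroup.center G) with hZfdef
  set nc : Finset G := Finset.univ.filter (fun z : G => ¬ z ∈ Subgroup.center G) with hncdef
  have hsplitcard : Zf.card + nc.card = n := by
    rw [hZfdef, hncdef, Finset.card_filter_add_card_filter_not, Finset.card_univ]
  have h1Z : (1 : G) ∈ Zf := Finset.mem_filter.mpr ⟨Finset.mem_univ _, Subgroup.one_mem _⟩
  have hconjclass : ∀ y w : G, y ∉ Subgroup.center G → IsConj y w → w ∉ Subgroup.center G := by
    intro y w hy hcw hw
    obtain ⟨u, hu⟩ := isConj_iff.mp hcw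
    have hww : (u : G)⁻¹ * w * u = w := by
      have h5 : w * u = u * w := (Subgroup.mem_center_iff.mp hw u).symm
      calc (u : G)⁻¹ * w * u = u⁻¹ * (w * u) := by group
        _ = u⁻¹ * (u * w) := by rw [h5]
        _ = w := by group
    have hyw : y = w := by
      have h6 : y = (u : G)⁻¹ * w * u := by rw [← hu]; group
      rw [h6, hww]
    exact hy (hyw ▸ hw)
  set cls : G → Finset G := fun y => Finset.univ.filter fun w => IsConj y w with hclsdef
  have hOS : ∀ y : G, (cls y).card * Nat.card (Subgroup.centralizer ({y} : Set G)) = n :=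
    fun y => aux_orbit_stab y
  have hclsp : ∀ y : G, y ∉ Subgroup.center G → p ≤ (cls y).card := by
    intro y hy
    have h1 := hcenttop y hy
    have h2 := hOS y
    have h3 : 0 < Nat.card (Subgroup.centralizer ({y} : Set G)) := Nat.card_pos
    exact Nat.le_of_mul_le_mul_right (h2 ▸ h1) h3
  set classes : Finset (ConjClasses G) := nc.image ConjClasses.mk with hclassesdef
  set m := classes.card with hmdef
  set sz : ConjClasses G → ℕ := fun K => #(nc.filter fun w => ConjClasses.mk w = K) with hszdef
  have hncsum : nc.card = ∑ K ∈ classes, sz K :=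
    Finset.card_eq_sum_card_fiberwise fun x hx => Finset.mem_image_of_mem _ hx
  have hfib : ∀ y : G, y ∉ Subgroup.center G →
      nc.filter (fun w => ConjClasses.mk w = ConjClasses.mk y) = cls y := by
    intro y hy
    ext w
    simp only [hncdef, hclsdef, Finset.mem_filter, Finset.mem_univ, true_and]
    constructor
    · rintro ⟨hwnc, hmk⟩
      exact isConj_comm.mp (ConjClasses.mk_eq_mk_iff_isConj.mp hmk)
    · intro hcw
      exact ⟨fun hw => hconjclass y w hy hcw hw,
        ConjClasses.mk_eq_mk_iff_isConj.mpr (isConj_comm.mp hcw)⟩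
  have hrep : ∀ K ∈ classes, ∃ y : G, y ∉ Subgroup.center G ∧ ConjClasses.mk y = K ∧
      sz K = (cls y).card := by
    intro K hK
    obtain ⟨y, hy, hyK⟩ := Finset.mem_image.mp hK
    have hyc : y ∉ Subgroup.center G := by
      have := Finset.mem_filter.mp hy
      exact this.2
    refine ⟨y, hyc, hyK, ?_⟩
    simp only [hszdef]
    rw [← hyK, hfib y hyc]
  have hszp : ∀ K ∈ classes, p ≤ sz K := by
    intro K hK
    obtain ⟨y, hyc, hyK, hyz⟩ := hrep K hK
    rw [hyz]
    exact hclsp y hyc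
  have hsum_split : ∑ x : G, c x = (∑ z ∈ Zf, c z) + (∑ y ∈ nc, c y) :=
    (Finset.sum_filter_add_sum_filter_not Finset.univ _ c).symm
  have hZsum : ∑ z ∈ Zf, c z = c 1 + ∑ z ∈ Zf.erase 1, c z :=
    (Finset.add_sum_erase Zf c h1Z).symm
  have hZfpos : 0 < Zf.card := Finset.card_pos.mpr ⟨1, h1Z⟩
  have hzfe : Zf.card = (Zf.erase 1).card + 1 := by
    rw [Finset.card_erase_of_mem h1Z]; omega
  rw [hcount, pow_two]
  by_cases hdef : ∃ y : G, y ∉ Subgroup.center G ∧ C y ≠ Subgroup.centralizer ({y} : Set G)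
  · -- deficient case
    obtain ⟨y₀, hy₀c, hy₀d⟩ := hdef
    set Def : Finset G := nc.filter (fun y => C y ≠ Subgroup.centralizer ({y} : Set G)) with hDefdef
    have hclssub : cls y₀ ⊆ Def := by
      intro w hw
      have hcw : IsConj y₀ w := by
        have := Finset.mem_filter.mp hw
        exact this.2
      have hwnc : w ∉ Subgroup.center G := hconjclass y₀ w hy₀c hcw
      refine Finset.mem_filter.mpr ⟨Finset.mem_filter.mpr ⟨Finset.mem_univ _, hwnc⟩, ?_⟩
      obtain ⟨u, hu⟩ := isConj_iff.mp hcw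
      intro hCw
      apply hy₀d
      have hgw : (u⁻¹)⁻¹ * y₀ * u⁻¹ = w := by rw [← hu]; group
      ext b
      have hab : u⁻¹ * (u * b * u⁻¹) * (u⁻¹)⁻¹ = b := by group
      have h1 := hCconj u⁻¹ y₀ (u * b * u⁻¹)
      have h2 := hZconj u⁻¹ y₀ (u * b * u⁻¹)
      rw [hgw] at h1 h2
      rw [hCw] at h1
      rw [hab] at h1 h2
      rw [← h1]
      exact h2
    have hDge : p ≤ Def.card := (hclsp y₀ hy₀c).trans (Finset.card_le_card hclssub)
    have hdefbound : ∀ y ∈ Def, p * p * c y ≤ n := by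
      intro y hy
      have hync : y ∉ Subgroup.center G := by
        have := Finset.mem_filter.mp (Finset.mem_filter.mp hy).1
        exact this.2
      have hCne : C y ≠ Subgroup.centralizer ({y} : Set G) := (Finset.mem_filter.mp hy).2
      have h1 : p * c y ≤ Nat.card (Subgroup.centralizer ({y} : Set G)) :=
        aux_gap hp hmin (hCle y) hCne
      calc p * p * c y = p * (p * c y) := by ring
        _ ≤ p * Nat.card (Subgroup.centralizer ({y} : Set G)) := Nat.mul_le_mul_left _ h1
        _ ≤ n := hcenttop y hync
    have hsub : Def ⊆ ((Finset.univ : Finset G).erase 1) := by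
      intro y hy
      have hync : y ∉ Subgroup.center G := by
        have := Finset.mem_filter.mp (Finset.mem_filter.mp hy).1
        exact this.2
      exact Finset.mem_erase.mpr ⟨fun h1y => hync (h1y ▸ Subgroup.one_mem _), Finset.mem_univ _⟩
    set R : Finset G := (((Finset.univ : Finset G).erase 1)) \ Def with hRdef
    have hsum1 : ∑ x : G, c x = c 1 + ∑ x ∈ ((Finset.univ : Finset G).erase 1), c x :=
      (Finset.add_sum_erase Finset.univ c (Finset.mem_univ 1)).symm
    have hsplit2 : ∑ x ∈ ((Finset.univ : Finset G).erase 1), c x = (∑ x ∈ R, c x) + ∑ x ∈ Def, c x :=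
      (Finset.sum_sdiff hsub).symm
    have hcards : 1 + Def.card + R.card = n := by
      have h1 : R.card = (((Finset.univ : Finset G).erase 1)).card - Def.card := Finset.card_sdiff_of_subset hsub
      have h2 : (((Finset.univ : Finset G).erase 1)).card = n - 1 := by
        rw [Finset.card_erase_of_mem (Finset.mem_univ 1), Finset.card_univ]
      have h3 : Def.card ≤ (((Finset.univ : Finset G).erase 1)).card := Finset.card_le_card hsub
      omega
    have e1 : p * p * (∑ x : G, c x) =
        p * p * c 1 + p * p * (∑ x ∈ R, c x) + p * p * (∑ y ∈ Def, c y) := by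
      rw [hsum1, hsplit2]; ring
    have e2 : p * p * c 1 ≤ p * p * n := Nat.mul_le_mul_left _ (hcle 1)
    have e3 : p * p * (∑ x ∈ R, c x) ≤ R.card * (p * n) := by
      rw [Finset.mul_sum]
      calc ∑ x ∈ R, p * p * c x ≤ ∑ x ∈ R, p * n := Finset.sum_le_sum (fun x hx => by
            have hx1 : x ≠ 1 := (Finset.mem_erase.mp (Finset.mem_sdiff.mp hx).1).1
            calc p * p * c x = p * (p * c x) := by ring
              _ ≤ p * n := Nat.mul_le_mul_left _ (hk3 x hx1))
        _ = R.card * (p * n) := by rw [Finset.sum_const, smul_eq_mul]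
    have e4 : p * p * (∑ y ∈ Def, c y) ≤ Def.card * n := by
      rw [Finset.mul_sum]
      calc ∑ y ∈ Def, p * p * c y ≤ ∑ y ∈ Def, n := Finset.sum_le_sum hdefbound
        _ = Def.card * n := by rw [Finset.sum_const, smul_eq_mul]
    have e5 : p * p * (∑ x : G, c x) ≤ p * p * n + R.card * (p * n) + Def.card * n := by omega
    have e6a : p * p + Def.card ≤ p + p * Def.card := by
      zify
      nlinarith [hDge, hp.two_le]
    have e6 : p * p * n + R.card * (p * n) + Def.card * n ≤ p * (n * n) := by
      have h1 : p * p * n + Def.card * n ≤ p * n + p * Def.card * n := by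
        calc p * p * n + Def.card * n = (p * p + Def.card) * n := by ring
          _ ≤ (p + p * Def.card) * n := Nat.mul_le_mul_right _ e6a
          _ = p * n + p * Def.card * n := by ring
      have h2 : p * (n * n) = p * n + p * Def.card * n + R.card * (p * n) := by
        calc p * (n * n) = p * ((1 + Def.card + R.card) * n) := by rw [hcards]
          _ = p * n + p * Def.card * n + R.card * (p * n) := by ring
      omega
    have e7 : p * (p * (∑ x : G, c x)) ≤ p * (n * n) := by
      calc p * (p * (∑ x : G, c x)) = p * p * (∑ x : G, c x) := by ring
        _ ≤ p * (n * n) := e5.trans e6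
    exact Nat.le_of_mul_le_mul_left e7 hp0
  · -- nondeficient case
    push_neg at hdef
    have hZG' : ∀ w : G, w ∈ Subgroup.center G → w ∈ commutator G → w = 1 := by
      intro w hwZ hwC
      apply hZtriv
      intro y
      by_cases hy : y ∈ Subgroup.center G
      · exact hG'Z w hwC y hy
      · refine (hC y w).mp ?_
        rw [hdef y hy]
        exact Subgroup.mem_centralizer_singleton_iff.mpr
          ((Subgroup.mem_center_iff.mp hwZ y).symm)
    have hsum_nc : ∑ y ∈ nc, c y = m * n := by
      rw [← Finset.sum_fiberwise_of_maps_to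
        (g := ConjClasses.mk) (fun x hx => Finset.mem_image_of_mem _ hx) c]
      have hcl : ∀ K ∈ classes, ∑ y ∈ nc.filter (fun w => ConjClasses.mk w = K), c y = n := by
        intro K hK
        obtain ⟨y, hy, hyK, hszK⟩ := hrep K hK
        have hfibK : nc.filter (fun w => ConjClasses.mk w = K) = cls y := by
          rw [← hyK]; exact hfib y hy
        have hcw : ∀ w ∈ cls y, c w * (cls y).card = n := by
          intro w hw
          have hcw' : IsConj y w := by
            have := Finset.mem_filter.mp hw
            exact this.2
          have hwnc : w ∉ Subgroup.center G := hconjclass y w hy hcw'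
          have hclseq : cls w = cls y := by
            ext v
            simp only [hclsdef, Finset.mem_filter, Finset.mem_univ, true_and]
            exact ⟨fun h => hcw'.trans h, fun h => (isConj_comm.mp hcw').trans h⟩
          have h2 := hOS w
          rw [hclseq] at h2
          have h3 : c w = Nat.card (Subgroup.centralizer ({w} : Set G)) := by
            simp only [hcdef]
            rw [hdef w hwnc]
          rw [h3, mul_comm]
          exact h2
        have hsum1 : (∑ w ∈ cls y, c w) * (cls y).card = (cls y).card * n := by
          rw [Finset.sum_mul]
          calc ∑ w ∈ cls y, c w * (cls y).card = ∑ w ∈ cls y, n := Finset.sum_congr rfl hcw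
            _ = (cls y).card * n := by rw [Finset.sum_const, smul_eq_mul]
        have hpos : 0 < (cls y).card := lt_of_lt_of_le hp0 (hclsp y hy)
        have h4 : ∑ w ∈ cls y, c w = n := by
          have h5 : (∑ w ∈ cls y, c w) * (cls y).card = n * (cls y).card := by
            rw [hsum1, mul_comm]
          exact Nat.eq_of_mul_eq_mul_right hpos h5
        rw [hfibK]
        exact h4
      calc ∑ K ∈ classes, ∑ y ∈ nc.filter (fun w => ConjClasses.mk w = K), c y
          = ∑ K ∈ classes, n := Finset.sum_congr rfl hcl
        _ = m * n := by rw [Finset.sum_const, smul_eq_mul, hmdef]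
    have hstar : p + p * m ≤ 1 + ∑ K ∈ classes, sz K := by
      by_cases hall : ∀ K ∈ classes, sz K = p
      · exfalso
        have hidx_all : ∀ y : G, y ∉ Subgroup.center G →
            (Subgroup.centralizer ({y} : Set G)).index = p := by
          intro y hy
          have hync2 : y ∈ nc := Finset.mem_filter.mpr ⟨Finset.mem_univ _, hy⟩
          have hyK : ConjClasses.mk y ∈ classes := Finset.mem_image_of_mem _ hync2
          have h1 : sz (ConjClasses.mk y) = p := hall _ hyK
          have h2 : sz (ConjClasses.mk y) = (cls y).card := by
            simp only [hszdef]
            rw [hfib y hy]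
          have h3 := hOS y
          have h4 : Nat.card (Subgroup.centralizer ({y} : Set G)) *
              (Subgroup.centralizer ({y} : Set G)).index = n :=
            (Subgroup.card_mul_index (Subgroup.centralizer ({y} : Set G))).trans
              Nat.card_eq_fintype_card
          have hccpos : 0 < Nat.card (Subgroup.centralizer ({y} : Set G)) := Nat.card_pos
          have hclp : (cls y).card = p := by rw [← h2, h1]
          have h5 : Nat.card (Subgroup.centralizer ({y} : Set G)) * p =
              Nat.card (Subgroup.centralizer ({y} : Set G)) *
                (Subgroup.centralizer ({y} : Set G)).index := by
            rw [h4, mul_comm, ← hclp]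
            exact h3
          exact (Nat.eq_of_mul_eq_mul_left hccpos h5).symm
        obtain ⟨a, b, hab⟩ := hnonab
        have hcen := aux_comm_center hp hmin hidx_all hab
        have hcomm : a⁻¹ * b⁻¹ * a * b ∈ commutator G := by
          have h6 : a⁻¹ * b⁻¹ * a * b = ⁅a⁻¹, b⁻¹⁆ := by
            rw [commutatorElement_def]; group
          rw [h6, _root_.commutator_def G]
          exact Subgroup.commutator_mem_commutator (Subgroup.mem_top _) (Subgroup.mem_top _)
        have h1 := hZG' _ hcen hcomm
        apply hab
        calc a * b = (b * a) * (a⁻¹ * b⁻¹ * a * b) := by group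
          _ = b * a := by rw [h1, mul_one]
      · push_neg at hall
        obtain ⟨K₀, hK₀, hK₀ne⟩ := hall
        have hK₀p1 : p + 1 ≤ sz K₀ := by
          have := hszp K₀ hK₀
          omega
        obtain ⟨y₀, hy₀c, hy₀K, hy₀sz⟩ := hrep K₀ hK₀
        by_cases hB0 : Zf.card = 1
        · have h1 : n = 1 + ∑ K ∈ classes, sz K := by
            rw [← hsplitcard, hB0, hncsum]
          have h2 : p * m ≤ ∑ K ∈ classes, sz K := by
            calc p * m = ∑ _K ∈ classes, p := by
                  rw [Finset.sum_const, smul_eq_mul, mul_comm, hmdef]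
              _ ≤ ∑ K ∈ classes, sz K := Finset.sum_le_sum hszp
          obtain ⟨k, hk⟩ := hdvd
          have hkm : m < k := by
            by_contra hle
            push_neg at hle
            have h7 : n ≤ p * m := by
              rw [hk]
              exact Nat.mul_le_mul_left _ hle
            omega
          have h8 : p * (m + 1) ≤ n := by
            rw [hk]
            exact Nat.mul_le_mul_left _ hkm
          have h9 : p * (m + 1) = p * m + p := by ring
          omega
        · have hzcd : Zf.card ∣ n := by
            have h10 : Nat.card (Subgroup.center G) = Zf.card :=
              aux_card_subtype' (fun z : G => z ∈ Subgroup.center G)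
            rw [← h10, hndef, ← Nat.card_eq_fintype_card]
            exact Subgroup.card_subgroup_dvd_card _
          have hzcp : p ≤ Zf.card := aux_p_le_divisor hp hmin hzcd hB0
          set φ : G → ConjClasses G := fun z => ConjClasses.mk (z * y₀) with hφdef
          have hncmem : ∀ z ∈ Zf, z * y₀ ∉ Subgroup.center G := by
            intro z hz h
            have hzc : z ∈ Subgroup.center G := (Finset.mem_filter.mp hz).2
            apply hy₀c
            have h11 : y₀ = z⁻¹ * (z * y₀) := by group
            rw [h11]
            exact mul_mem (inv_mem hzc) h
          have hmapsto : ∀ z ∈ Zf, φ z ∈ classes := by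
            intro z hz
            exact Finset.mem_image_of_mem _
              (Finset.mem_filter.mpr ⟨Finset.mem_univ _, hncmem z hz⟩)
          have hcenteq : ∀ z ∈ Zf, Subgroup.centralizer ({z * y₀} : Set G) =
              Subgroup.centralizer ({y₀} : Set G) := by
            intro z hz
            have hzc : z ∈ Subgroup.center G := (Finset.mem_filter.mp hz).2
            ext k
            rw [Subgroup.mem_centralizer_singleton_iff, Subgroup.mem_centralizer_singleton_iff]
            have hzk : k * z = z * k := Subgroup.mem_center_iff.mp hzc k
            constructor
            · intro h
              have h2 : z * (k * y₀) = z * (y₀ * k) := by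
                calc z * (k * y₀) = k * (z * y₀) := by rw [← mul_assoc, ← hzk, mul_assoc]
                  _ = (z * y₀) * k := h
                  _ = z * (y₀ * k) := by rw [mul_assoc]
              exact mul_left_cancel h2
            · intro h
              calc k * (z * y₀) = z * (k * y₀) := by rw [← mul_assoc, hzk, mul_assoc]
                _ = z * (y₀ * k) := by rw [h]
                _ = (z * y₀) * k := by rw [mul_assoc]
          have hszφ : ∀ z ∈ Zf, sz (φ z) = sz K₀ := by
            intro z hz
            have h1 : sz (φ z) = (cls (z * y₀)).card := by
              simp only [hszdef, hφdef]
              rw [hfib _ (hncmem z hz)]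
            have h2 := hOS (z * y₀)
            have h3 := hOS y₀
            rw [hcenteq z hz] at h2
            have hpos : 0 < Nat.card (Subgroup.centralizer ({y₀} : Set G)) := Nat.card_pos
            have h4 : (cls (z * y₀)).card = (cls y₀).card :=
              Nat.eq_of_mul_eq_mul_right hpos (h2.trans h3.symm)
            rw [h1, h4, ← hy₀sz]
          have hinj : Set.InjOn φ Zf := by
            intro z hz z' hz' heq
            have hconj' : IsConj (z * y₀) (z' * y₀) := ConjClasses.mk_eq_mk_iff_isConj.mp heq
            obtain ⟨g, hg⟩ := isConj_iff.mp hconj'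
            have hzc : z ∈ Subgroup.center G := (Finset.mem_filter.mp hz).2
            have hz'c : z' ∈ Subgroup.center G := (Finset.mem_filter.mp hz').2
            have hcommz : z'⁻¹ * z ∈ Subgroup.center G := mul_mem (inv_mem hz'c) hzc
            have hgz : (g : G) * z = z * g := Subgroup.mem_center_iff.mp hzc g
            have h1 : z * ((g : G) * y₀ * g⁻¹) = z' * y₀ := by
              calc z * ((g : G) * y₀ * g⁻¹) = (z * g) * y₀ * g⁻¹ := by group
                _ = (g * z) * y₀ * g⁻¹ := by rw [hgz]
                _ = g * (z * y₀) * g⁻¹ := by group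
                _ = z' * y₀ := hg
            have h2 : z'⁻¹ * z = y₀ * ((g : G) * y₀ * g⁻¹)⁻¹ := by
              calc z'⁻¹ * z = z'⁻¹ * (z * ((g : G) * y₀ * g⁻¹)) * ((g : G) * y₀ * g⁻¹)⁻¹ := by
                    group
                _ = z'⁻¹ * (z' * y₀) * ((g : G) * y₀ * g⁻¹)⁻¹ := by rw [h1]
                _ = y₀ * ((g : G) * y₀ * g⁻¹)⁻¹ := by group
            have h3 : z'⁻¹ * z = ⁅y₀, (g : G)⁆ := by
              rw [h2, commutatorElement_def]; group
            have h4 : z'⁻¹ * z ∈ commutator G := by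
              rw [h3, _root_.commutator_def G]
              exact Subgroup.commutator_mem_commutator (Subgroup.mem_top _) (Subgroup.mem_top _)
            have h5 := hZG' _ hcommz h4
            calc z = z' * (z'⁻¹ * z) := by group
              _ = z' * 1 := by rw [h5]
              _ = z' := mul_one z'
          set img := Zf.image φ with himgdef
          have himgsub : img ⊆ classes := Finset.image_subset_iff.mpr hmapsto
          have himgcard : img.card = Zf.card := Finset.card_image_of_injOn hinj
          have hsum_img : ∑ K ∈ img, sz K = Zf.card * sz K₀ := by
            rw [Finset.sum_const_nat (m := sz K₀) ?_, himgcard]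
            intro K hK
            obtain ⟨z, hz, rfl⟩ := Finset.mem_image.mp hK
            exact hszφ z hz
          have hsum_rest : (m - Zf.card) * p ≤ ∑ K ∈ classes \ img, sz K := by
            have h12 : (classes \ img).card = m - Zf.card := by
              rw [Finset.card_sdiff_of_subset himgsub, himgcard, hmdef]
            calc (m - Zf.card) * p = (classes \ img).card * p := by rw [h12]
              _ = (classes \ img).card • p := by rw [smul_eq_mul]
              _ ≤ ∑ K ∈ classes \ img, sz K := Finset.card_nsmul_le_sum _ _ _
                  (fun K hK => hszp K (Finset.mem_sdiff.mp hK).1)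
          have hsum_split2 : ∑ K ∈ classes, sz K =
              (∑ K ∈ classes \ img, sz K) + ∑ K ∈ img, sz K := (Finset.sum_sdiff himgsub).symm
          have hmzc : Zf.card ≤ m := by
            rw [← himgcard, hmdef]
            exact Finset.card_le_card himgsub
          have h13 : Zf.card * (p + 1) ≤ Zf.card * sz K₀ := Nat.mul_le_mul_left _ hK₀p1
          have h14 : Zf.card * (p + 1) = Zf.card * p + Zf.card := by ring
          have h15 : (m - Zf.card) * p + Zf.card * p = m * p := by
            have : m - Zf.card + Zf.card = m := by omega
            calc (m - Zf.card) * p + Zf.card * p = (m - Zf.card + Zf.card) * p := by ring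
              _ = m * p := by rw [this]
          have h16 : p * m = m * p := mul_comm p m
          omega
    -- assemble nondeficient case
    have hA : ∑ z ∈ Zf.erase 1, p * c z ≤ (Zf.erase 1).card * n := by
      calc ∑ z ∈ Zf.erase 1, p * c z ≤ ∑ _z ∈ Zf.erase 1, n :=
            Finset.sum_le_sum (fun z hz => hk3 z (Finset.mem_erase.mp hz).1)
        _ = (Zf.erase 1).card * n := by rw [Finset.sum_const, smul_eq_mul]
    have hn_eq : n = 1 + (Zf.erase 1).card + ∑ K ∈ classes, sz K := by
      rw [← hsplitcard, hncsum]
      omega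
    have h11 : p + (Zf.erase 1).card + p * m ≤ n := by omega
    calc p * ∑ x : G, c x
        = p * c 1 + (∑ z ∈ Zf.erase 1, p * c z) + p * (∑ y ∈ nc, c y) := by
          rw [hsum_split, hZsum]
          simp only [mul_add, Finset.mul_sum]
      _ ≤ p * n + (Zf.erase 1).card * n + p * (m * n) := by
          refine add_le_add (add_le_add (Nat.mul_le_mul_left _ (hcle 1)) hA) ?_
          rw [hsum_nc]
      _ = (p + (Zf.erase 1).card + p * m) * n := by ring
      _ ≤ n * n := Nat.mul_le_mul_right _ h11
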